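/- Let U and Y be complex Hilbert spaces, F a closed subspace of U, and ω = (ω₁, ω₂) : F → Y ⊕ U a contraction. Let Γ_{H_c} : U → ℓ²(ℕ, Y) be the contraction defined by Γ_{H_c} u = (ω₁ (Π_F ω₂)ⁿ Π_F u)_{n≥0} (the operator associated with the central solution). Then Γ_{H_c} is a co-isometry if and only if for every integer n ≥ 0 the operator ω₁ (Π_F ω₂)ⁿ : F → Y is a co-isometry. -/

import Mathlib

open scoped ENNReal

set_option maxHeartbeats 1000000 in
open ContinuousLinearMap in
/-- the operator `Γ_{H_c} : U → ℓ²(ℕ, Y)` associated with the central solution,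
`Γ_{H_c} u = (ω₁ (Π_F ω₂)ⁿ Π_F u)ₙ`, is a co-isometry iff every operator `ω₁ (Π_F ω₂)ⁿ` is a
co-isometry. -/
theorem stmt_3
    {U Y : Type*}
    [NormedAddCommGroup U] [InnerProductSpace ℂ U] [CompleteSpace U]
    [NormedAddCommGroup Y] [InnerProductSpace ℂ Y] [CompleteSpace Y]
    (F : Submodule ℂ U) [CompleteSpace F]
    (ω₁ : F →L[ℂ] Y) (ω₂ : F →L[ℂ] U)
    (hcontr : ∀ f : F, ‖ω₁ f‖ ^ 2 + ‖ω₂ f‖ ^ 2 ≤ ‖f‖ ^ 2)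
    (Γ : U →L[ℂ] lp (fun _ : ℕ => Y) 2) (hΓnorm : ‖Γ‖ ≤ 1)
    (hΓ : ∀ (u : U) (n : ℕ),
      Γ u n = ω₁ ((((F.orthogonalProjectionOnto).comp ω₂) ^ n) (F.orthogonalProjectionOnto u))) :
    Γ.comp Γ.adjoint = 1 ↔
      ∀ n : ℕ,
        (ω₁.comp (((F.orthogonalProjectionOnto).comp ω₂) ^ n)).comp
          (ω₁.comp (((F.orthogonalProjectionOnto).comp ω₂) ^ n)).adjoint = 1 := by
  set T : ℕ → (F →L[ℂ] Y) := fun n => ω₁.comp (((F.orthogonalProjectionOnto).comp ω₂) ^ n) with hTdef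
  -- `Γ.adjoint` on basis elements
  have hadj : ∀ (n : ℕ) (y : Y),
      Γ.adjoint (lp.single 2 n y) = (((T n).adjoint y : F) : U) := by
    intro n y
    apply ext_inner_right ℂ
    intro u
    rw [adjoint_inner_left, lp.inner_single_left, hΓ]
    have h1 : ((((T n).adjoint y : F) : U)) = F.subtypeL ((T n).adjoint y) := rfl
    rw [h1, ← adjoint_inner_right, Submodule.adjoint_subtypeL, adjoint_inner_left]
    rfl
  have hinner : ∀ (m n : ℕ) (y z : Y),
      (inner ℂ (Γ.adjoint (lp.single 2 m y)) (Γ.adjoint (lp.single 2 n z)) : ℂ)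
        = inner ℂ y (T m ((T n).adjoint z)) := by
    intro m n y z
    rw [hadj, hadj, ← Submodule.coe_inner, adjoint_inner_left]
  constructor
  · intro h n
    ext z
    rw [ContinuousLinearMap.comp_apply, ContinuousLinearMap.one_apply]
    apply ext_inner_left ℂ
    intro y
    have h2 : Γ (Γ.adjoint (lp.single 2 n z)) = lp.single 2 n z := by
      have := congrFun (congrArg DFunLike.coe h) (lp.single 2 n z)
      simpa only [ContinuousLinearMap.comp_apply, ContinuousLinearMap.one_apply] using this
    have h3 := hinner n n y z
    rw [adjoint_inner_left, h2, lp.inner_single_left, lp.single_apply_self] at h3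
    exact h3.symm
  · intro h
    have hTT : ∀ (n : ℕ) (z : Y), T n ((T n).adjoint z) = z := by
      intro n z
      have := congrFun (congrArg DFunLike.coe (h n)) z
      simpa only [hTdef, ContinuousLinearMap.comp_apply, ContinuousLinearMap.one_apply] using this
    have hadjnorm : ∀ x : lp (fun _ : ℕ => Y) 2, ‖Γ.adjoint x‖ ≤ ‖x‖ := by
      intro x
      calc ‖Γ.adjoint x‖ ≤ ‖Γ.adjoint‖ * ‖x‖ := Γ.adjoint.le_opNorm x
        _ ≤ 1 * ‖x‖ := by
            apply mul_le_mul_of_nonneg_right _ (norm_nonneg x)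
            rw [LinearIsometryEquiv.norm_map adjoint Γ]; exact hΓnorm
        _ = ‖x‖ := one_mul _
    have hnormsq : ∀ (n : ℕ) (y : Y), ‖Γ.adjoint (lp.single 2 n y)‖ ^ 2 = ‖y‖ ^ 2 := by
      intro n y
      have h1 := hinner n n y y
      rw [hTT, inner_self_eq_norm_sq_to_K, inner_self_eq_norm_sq_to_K] at h1
      exact_mod_cast h1
    -- cross terms vanish
    have hcross : ∀ (m n : ℕ), m ≠ n → ∀ (z : Y), T m ((T n).adjoint z) = 0 := by
      intro m n hmn z
      apply ext_inner_left ℂ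
      intro y
      rw [inner_zero_right]
      set c : ℂ := inner ℂ y (T m ((T n).adjoint z)) with hc
      have key : ∀ a : ℂ, ((starRingEnd ℂ) a * c).re ≤ 0 := by
        intro a
        have e1 := pow_le_pow_left₀ (norm_nonneg _)
          (hadjnorm (a • lp.single 2 m y + lp.single 2 n z)) 2
        rw [map_add, map_smul] at e1
        rw [norm_add_sq (𝕜 := ℂ), norm_add_sq (𝕜 := ℂ)] at e1
        rw [inner_smul_left, inner_smul_left] at e1
        rw [hinner, ← hc] at e1
        have hz : (inner ℂ (lp.single (E := fun _ : ℕ => Y) 2 m y) (lp.single 2 n z) : ℂ) = 0 := by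
          rw [lp.inner_single_left]
          rw [lp.single_apply_ne _ _ _ hmn, inner_zero_right]
        rw [hz, mul_zero] at e1
        rw [norm_smul, norm_smul, mul_pow, mul_pow, hnormsq, hnormsq] at e1
        have hy' : ‖lp.single (E := fun _ : ℕ => Y) 2 m y‖ = ‖y‖ :=
          lp.norm_single (E := fun _ : ℕ => Y) (p := 2) (by norm_num) m y
        have hz' : ‖lp.single (E := fun _ : ℕ => Y) 2 n z‖ = ‖z‖ :=
          lp.norm_single (E := fun _ : ℕ => Y) (p := 2) (by norm_num) n z
        rw [hy', hz'] at e1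
        simp only [map_zero] at e1
        have h4 : RCLike.re ((starRingEnd ℂ) a * c) ≤ 0 := by linarith
        simpa using h4
      have h0 := key c
      rw [mul_comm, Complex.mul_conj] at h0
      rw [Complex.ofReal_re] at h0
      have : Complex.normSq c = 0 := le_antisymm h0 (Complex.normSq_nonneg c)
      exact (Complex.normSq_eq_zero.mp this).symm ▸ rfl
    -- Γ Γ* fixes each single
    have hsingle : ∀ (n : ℕ) (y : Y),
        Γ (Γ.adjoint (lp.single 2 n y)) = lp.single 2 n y := by
      intro n y
      rw [hadj]
      apply lp.ext
      funext m
      have h1 := hΓ (((T n).adjoint y : F) : U) m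
      rw [Submodule.orthogonalProjectionOnto_mem_subspace_eq_self] at h1
      rw [h1]
      by_cases hmn : m = n
      · subst hmn
        exact (hTT m y).trans (lp.single_apply_self (E := fun _ : ℕ => Y) 2 m y).symm
      · exact (hcross m n hmn y).trans (lp.single_apply_ne (E := fun _ : ℕ => Y) 2 n y hmn).symm
    -- conclude by density
    refine ContinuousLinearMap.ext fun x => ?_
    rw [ContinuousLinearMap.comp_apply, ContinuousLinearMap.one_apply]
    have hs := lp.hasSum_single (E := fun _ : ℕ => Y) ENNReal.ofNat_ne_top x
    have h2 := (Γ.comp Γ.adjoint).hasSum hs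
    simp only [ContinuousLinearMap.comp_apply, hsingle] at h2
    exact h2.unique hs
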